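/- If G is a graph with an edge, then for every edge e of G, γ_g'(G−e) ≥ 2; moreover if γ_g'(G) = 3 then γ_g'(G−e) ≥ 3. -/
import Mathlib


open Classical

noncomputable section

namespace DomGame

variable {V : Type*} [Fintype V]

/-- Closed neighborhood of `v` as a `Finset`. -/
noncomputable def N (G : SimpleGraph V) (v : V) : Finset V :=
  Finset.univ.filter (fun u => G.Adj v u ∨ u = v)

/-- Legal moves given the set `S` of already dominated vertices. -/
noncomputable def moves (G : SimpleGraph V) (S : Finset V) : Finset V :=
  Finset.univ.filter (fun v => ¬ N G v ⊆ S)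

lemma card_lt {G : SimpleGraph V} {S : Finset V} (v : V) (hv : v ∈ moves G S) :
    (Finset.univ \ (S ∪ N G v)).card < (Finset.univ \ S).card := by
  simp only [moves, Finset.mem_filter] at hv
  obtain ⟨u, hu, hus⟩ := Finset.not_subset.mp hv.2
  apply Finset.card_lt_card
  refine ⟨Finset.sdiff_subset_sdiff (le_refl _) Finset.subset_union_left, ?_⟩
  intro hsub
  have := hsub (Finset.mem_sdiff.mpr ⟨Finset.mem_univ u, hus⟩)
  rw [Finset.mem_sdiff, Finset.mem_union] at this
  exact this.2 (Or.inr hu)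

mutual
/-- Number of moves with optimal play when it is Dominator's turn and
`S` is the set of already dominated vertices. -/
noncomputable def gameD (G : SimpleGraph V) (S : Finset V) : ℕ :=
  if h : (moves G S).Nonempty then
    1 + (moves G S).attach.inf' (by simpa using h)
      (fun v => gameS G (S ∪ N G v.1))
  else 0
termination_by (Finset.univ \ S).card
decreasing_by exact card_lt v.1 v.2

/-- Number of moves with optimal play when it is Staller's turn. -/
noncomputable def gameS (G : SimpleGraph V) (S : Finset V) : ℕ :=
  if h : (moves G S).Nonempty then
    1 + (moves G S).attach.sup' (by simpa using h)
      (fun v => gameD G (S ∪ N G v.1))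
  else 0
termination_by (Finset.univ \ S).card
decreasing_by exact card_lt v.1 v.2
end

/-- The (Dominator-start) game domination number. -/
noncomputable def gammaG (G : SimpleGraph V) : ℕ := gameD G ∅

/-- The Staller-start game domination number. -/
noncomputable def gammaG' (G : SimpleGraph V) : ℕ := gameS G ∅

end DomGame



namespace DomGame

variable {V : Type*} [Fintype V]

lemma mem_N_self (G : SimpleGraph V) (v : V) : v ∈ N G v := by simp [N]

lemma mem_moves_of {G : SimpleGraph V} {S : Finset V} {v : V}
    (hv : ∃ u ∈ N G v, u ∉ S) : v ∈ moves G S := by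
  simp only [moves, Finset.mem_filter, Finset.mem_univ, true_and]
  exact Finset.not_subset.mpr hv

lemma mem_of_not_moves {G : SimpleGraph V} {S : Finset V}
    (h : ¬ (moves G S).Nonempty) (u : V) : u ∈ S := by
  rw [Finset.not_nonempty_iff_eq_empty, Finset.eq_empty_iff_forall_notMem] at h
  have hu := h u
  simp only [moves, Finset.mem_filter, Finset.mem_univ, true_and, not_not] at hu
  exact hu (mem_N_self G u)

lemma gameS_zero {G : SimpleGraph V} {S : Finset V}
    (h : ¬ (moves G S).Nonempty) : gameS G S = 0 := by
  rw [gameS]; simp [h]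

lemma gameD_zero {G : SimpleGraph V} {S : Finset V}
    (h : ¬ (moves G S).Nonempty) : gameD G S = 0 := by
  rw [gameD]; simp [h]

lemma moves_empty_of_all {G : SimpleGraph V} {S : Finset V}
    (h : ∀ u, u ∈ S) : ¬ (moves G S).Nonempty := by
  rintro ⟨w, hw⟩
  simp only [moves, Finset.mem_filter, Finset.mem_univ, true_and] at hw
  exact hw (fun x _ => h x)

lemma N_deleteEdges_subset (G : SimpleGraph V) (s : Set (Sym2 V)) (v : V) :
    N (G.deleteEdges s) v ⊆ N G v := by
  intro u hu
  simp only [N, Finset.mem_filter, Finset.mem_univ, true_and,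
    SimpleGraph.deleteEdges_adj] at hu ⊢
  tauto

/-- Any Staller move gives a lower bound on `gameS`. -/
lemma add_one_le_gameS {G : SimpleGraph V} {S : Finset V} {v : V}
    (h : v ∈ moves G S) : gameD G (S ∪ N G v) + 1 ≤ gameS G S := by
  rw [gameS, dif_pos ⟨v, h⟩, Nat.add_comm _ 1]
  exact Nat.add_le_add_left
    (Finset.le_sup' (fun w : {y // y ∈ moves G S} => gameD G (S ∪ N G w.1))
      (Finset.mem_attach _ ⟨v, h⟩)) 1

/-- Any Dominator move gives an upper bound on `gameD`. -/
lemma gameD_le_add_one {G : SimpleGraph V} {S : Finset V} {w : V}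
    (h : w ∈ moves G S) : gameD G S ≤ 1 + gameS G (S ∪ N G w) := by
  rw [gameD, dif_pos ⟨w, h⟩]
  exact Nat.add_le_add_left
    (Finset.inf'_le (fun u : {y // y ∈ moves G S} => gameS G (S ∪ N G u.1))
      (Finset.mem_attach _ ⟨w, h⟩)) 1

/-- `gameS` is attained by some Staller move. -/
lemma exists_gameS_eq {G : SimpleGraph V} {S : Finset V}
    (h : (moves G S).Nonempty) :
    ∃ v ∈ moves G S, gameS G S = 1 + gameD G (S ∪ N G v) := by
  rw [gameS, dif_pos h]
  obtain ⟨v, -, hv⟩ := Finset.exists_mem_eq_sup'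
    (show ((moves G S).attach).Nonempty by simpa using h)
    (fun w : {y // y ∈ moves G S} => gameD G (S ∪ N G w.1))
  exact ⟨v.1, v.2, by rw [hv]⟩

/-- `gameD` is attained by some Dominator move. -/
lemma exists_gameD_eq {G : SimpleGraph V} {S : Finset V}
    (h : (moves G S).Nonempty) :
    ∃ w ∈ moves G S, gameD G S = 1 + gameS G (S ∪ N G w) := by
  rw [gameD, dif_pos h]
  obtain ⟨w, -, hw⟩ := Finset.exists_mem_eq_inf'
    (show ((moves G S).attach).Nonempty by simpa using h)
    (fun u : {y // y ∈ moves G S} => gameS G (S ∪ N G u.1))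
  exact ⟨w.1, w.2, by rw [hw]⟩

end DomGame

open DomGame in
/-- If `G` has an edge, then `γ_g'(G−e) ≥ 2` for every edge `e`;
moreover if `γ_g'(G) = 3` then `γ_g'(G−e) ≥ 3`. -/
theorem gameS_edge_removal_lower {V : Type*} [Fintype V] (G : SimpleGraph V)
    (hG : G.edgeSet.Nonempty) (e : Sym2 V) (he : e ∈ G.edgeSet) :
    2 ≤ gammaG' (G.deleteEdges {e}) ∧
    (gammaG' G = 3 → 3 ≤ gammaG' (G.deleteEdges {e})) := by
  classical
  induction e using Sym2.ind with
  | _ a b =>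
  rw [SimpleGraph.mem_edgeSet] at he
  set G' := G.deleteEdges {s(a, b)} with hG'
  have hne : a ≠ b := he.ne
  have hnadj : ¬ G'.Adj a b := by
    simp [hG', SimpleGraph.deleteEdges_adj]
  have hbna : b ∉ N G' a := by
    simp only [N, Finset.mem_filter, Finset.mem_univ, true_and, not_or]
    exact ⟨hnadj, fun h => hne h.symm⟩
  have hMv : ∀ (H : SimpleGraph V) (v : V), v ∈ moves H (∅ : Finset V) :=
    fun H v => mem_moves_of ⟨v, mem_N_self H v, Finset.notMem_empty v⟩
  constructor
  · show 2 ≤ gameS G' ∅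
    have hS := add_one_le_gameS (hMv G' a)
    rw [Finset.empty_union] at hS
    have hb : b ∈ moves G' (N G' a) := mem_moves_of ⟨b, mem_N_self G' b, hbna⟩
    have h1 : 1 ≤ gameD G' (N G' a) := by
      rw [gameD, dif_pos ⟨b, hb⟩]
      exact Nat.le_add_right 1 _
    omega
  · intro h3
    show 3 ≤ gameS G' ∅
    by_contra hlt
    push_neg at hlt
    have h3' : gameS G (∅ : Finset V) = 3 := h3
    obtain ⟨x, -, hx⟩ := exists_gameS_eq (⟨a, hMv G a⟩ : (moves G (∅ : Finset V)).Nonempty)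
    rw [h3', Finset.empty_union] at hx
    have hD2 : gameD G (N G x) = 2 := by omega
    -- Staller plays x in G'
    have hS := add_one_le_gameS (hMv G' x)
    rw [Finset.empty_union] at hS
    have hDle : gameD G' (N G' x) ≤ 1 := by
      have : gameS G' (∅ : Finset V) ≤ 2 := by omega
      omega
    by_cases hM2 : (moves G' (N G' x)).Nonempty
    · obtain ⟨w, -, hw⟩ := exists_gameD_eq hM2
      have hS0 : gameS G' (N G' x ∪ N G' w) = 0 := by omega
      have hmv0 : ¬ (moves G' (N G' x ∪ N G' w)).Nonempty := by
        by_contra hc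
        obtain ⟨z, -, hz⟩ := exists_gameS_eq hc
        omega
      have hall : ∀ u, u ∈ N G x ∪ N G w := by
        intro u
        have hu := mem_of_not_moves hmv0 u
        rw [Finset.mem_union] at hu ⊢
        rcases hu with h | h
        · exact Or.inl (N_deleteEdges_subset G _ x h)
        · exact Or.inr (N_deleteEdges_subset G _ w h)
      by_cases hwm : w ∈ moves G (N G x)
      · have h0 : gameS G (N G x ∪ N G w) = 0 :=
          gameS_zero (moves_empty_of_all hall)
        have := gameD_le_add_one hwm
        omega
      · have hsub : N G w ⊆ N G x := by
          simp only [moves, Finset.mem_filter, Finset.mem_univ, true_and,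
            not_not] at hwm
          exact hwm
        have hallx : ∀ u, u ∈ N G x := by
          intro u
          rcases Finset.mem_union.mp (hall u) with h | h
          · exact h
          · exact hsub h
        rw [gameD_zero (moves_empty_of_all hallx)] at hD2
        omega
    · have hallx : ∀ u, u ∈ N G x := fun u =>
        N_deleteEdges_subset G _ x (mem_of_not_moves hM2 u)
      rw [gameD_zero (moves_empty_of_all hallx)] at hD2
      omega
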